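/- The RPL₀ derivation rules preserve semantic consequence: for each unary rule (∧r₁, ∧r₂, ∧l, ∨r, ∨l₁, ∨l₂, ¬r, ¬l), if the premise sequent is valid in a first-order structure under all variable assignments, then so is the conclusion; and for the resolution rule with most general unifier σ of the resolved atoms, if both variable-disjoint premises are valid in a structure under all assignments, then so is the resolved conclusion Γσ, Πσ ⊢ Δσ, Λσ. -/

import Mathlib

/- First-order terms. -/
inductive Tm where
  | var (x : ℕ)
  | app (f : ℕ) (ts : List Tm)

/-- Application of a substitution to a term. -/
def applyT (θ : ℕ → Tm) : Tm → Tm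
  | .var x => θ x
  | .app f ts => .app f (ts.attach.map fun x => applyT θ x.1)
decreasing_by all_goals (simp_wf; have := List.sizeOf_lt_of_mem x.2; omega)

/- Quantifier-free first-order formulas. -/
inductive Form where
  | atom (P : ℕ) (ts : List Tm)
  | conj (A B : Form)
  | disj (A B : Form)
  | neg (A : Form)

/-- Application of a substitution to a formula. -/
def applyF (θ : ℕ → Tm) : Form → Form
  | .atom P ts => .atom P (ts.map (applyT θ))
  | .conj A B => .conj (applyF θ A) (applyF θ B)
  | .disj A B => .disj (applyF θ A) (applyF θ B)
  | .neg A => .neg (applyF θ A)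

/-- Occurrence of a variable in a term. -/
inductive VarInT (x : ℕ) : Tm → Prop where
  | refl : VarInT x (.var x)
  | inApp {f ts t} : t ∈ ts → VarInT x t → VarInT x (.app f ts)

/-- Occurrence of a variable in a formula. -/
inductive VarInF (x : ℕ) : Form → Prop where
  | inAtom {P ts t} : t ∈ ts → VarInT x t → VarInF x (.atom P ts)
  | conjL {A B} : VarInF x A → VarInF x (.conj A B)
  | conjR {A B} : VarInF x B → VarInF x (.conj A B)
  | disjL {A B} : VarInF x A → VarInF x (.disj A B)
  | disjR {A B} : VarInF x B → VarInF x (.disj A B)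
  | negI {A} : VarInF x A → VarInF x (.neg A)

/-- θ unifies a list of formulas if it identifies them all. -/
def UnifiesL (θ : ℕ → Tm) (As : List Form) : Prop :=
  ∀ A ∈ As, ∀ B ∈ As, applyF θ A = applyF θ B

/-- θ is a most general unifier of a list of formulas. -/
def IsMGUL (θ : ℕ → Tm) (As : List Form) : Prop :=
  UnifiesL θ As ∧ ∀ τ : ℕ → Tm, UnifiesL τ As → ∃ δ : ℕ → Tm, ∀ x, τ x = applyT δ (θ x)

def IsAtomF : Form → Prop
  | .atom _ _ => True
  | _ => False

/-- Sequents: pairs of multisets of quantifier-free formulas. -/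
abbrev Sequent := Multiset Form × Multiset Form

/-- The calculus RPL₀, with axioms taken from a set `Ax` of sequents. -/
inductive Deriv (Ax : Set Sequent) : Sequent → Prop where
  | ax {S} : S ∈ Ax → Deriv Ax S
  | andr1 {Γ Δ A B} : Deriv Ax (Γ, (Form.conj A B) ::ₘ Δ) → Deriv Ax (Γ, A ::ₘ Δ)
  | andr2 {Γ Δ A B} : Deriv Ax (Γ, (Form.conj A B) ::ₘ Δ) → Deriv Ax (Γ, B ::ₘ Δ)
  | andl {Γ Δ A B} : Deriv Ax ((Form.conj A B) ::ₘ Γ, Δ) → Deriv Ax (A ::ₘ B ::ₘ Γ, Δ)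
  | orr {Γ Δ A B} : Deriv Ax (Γ, (Form.disj A B) ::ₘ Δ) → Deriv Ax (Γ, A ::ₘ B ::ₘ Δ)
  | orl1 {Γ Δ A B} : Deriv Ax ((Form.disj A B) ::ₘ Γ, Δ) → Deriv Ax (A ::ₘ Γ, Δ)
  | orl2 {Γ Δ A B} : Deriv Ax ((Form.disj A B) ::ₘ Γ, Δ) → Deriv Ax (B ::ₘ Γ, Δ)
  | negr {Γ Δ A} : Deriv Ax (Γ, (Form.neg A) ::ₘ Δ) → Deriv Ax (A ::ₘ Γ, Δ)
  | negl {Γ Δ A} : Deriv Ax ((Form.neg A) ::ₘ Γ, Δ) → Deriv Ax (Γ, A ::ₘ Δ)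
  | res {Γ Δ Γ₂ Δ₂ : Multiset Form} {As Bs : List Form} {θ : ℕ → Tm}
      (hA : As ≠ []) (hB : Bs ≠ [])
      (hatomA : ∀ A ∈ As, IsAtomF A) (hatomB : ∀ B ∈ Bs, IsAtomF B)
      (hdisj : ∀ x : ℕ, (∃ A ∈ As, VarInF x A) → ¬ ∃ B ∈ Bs, VarInF x B)
      (hmgu : IsMGUL θ (As ++ Bs))
      (h1 : Deriv Ax (Γ, Δ + ↑As)) (h2 : Deriv Ax (↑Bs + Γ₂, Δ₂)) :
      Deriv Ax ((Γ + Γ₂).map (applyF θ), (Δ + Δ₂).map (applyF θ))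

/- First-order structures. -/
structure Str where
  D : Type
  ne : Nonempty D
  fI : ℕ → List D → D
  pI : ℕ → List D → Prop

/-- Evaluation of a term in a structure under a variable assignment. -/
def evalT (M : Str) (v : ℕ → M.D) : Tm → M.D
  | .var x => v x
  | .app f ts => M.fI f (ts.attach.map fun x => evalT M v x.1)
decreasing_by all_goals (simp_wf; have := List.sizeOf_lt_of_mem x.2; omega)

/-- Satisfaction of a formula. -/
def holds (M : Str) (v : ℕ → M.D) : Form → Prop
  | .atom P ts => M.pI P (ts.map (evalT M v))
  | .conj A B => holds M v A ∧ holds M v B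
  | .disj A B => holds M v A ∨ holds M v B
  | .neg A => ¬ holds M v A

/-- A sequent Γ ⊢ Δ is valid in M if for every variable assignment, whenever all
    formulas of Γ hold, some formula of Δ holds (i.e. the universal closure of
    ⋀Γ → ⋁Δ holds). -/
def SeqValid (M : Str) (S : Sequent) : Prop :=
  ∀ v : ℕ → M.D, (∀ A ∈ S.1, holds M v A) → ∃ B ∈ S.2, holds M v B

theorem evalT_app (M : Str) (v : ℕ → M.D) (f : ℕ) (ts : List Tm) :
    evalT M v (.app f ts) = M.fI f (ts.map (evalT M v)) := by
  rw [evalT]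
  congr 1
  rw [List.attach_map_val]

theorem applyT_app (θ : ℕ → Tm) (f : ℕ) (ts : List Tm) :
    applyT θ (.app f ts) = .app f (ts.map (applyT θ)) := by
  rw [applyT]
  congr 1
  rw [List.attach_map_val]

theorem evalT_applyT (M : Str) (v : ℕ → M.D) (θ : ℕ → Tm) :
    ∀ t, evalT M v (applyT θ t) = evalT M (fun x => evalT M v (θ x)) t
  | .var x => by simp [applyT, evalT]
  | .app f ts => by
      rw [applyT_app, evalT_app, evalT_app, List.map_map]
      congr 1
      apply List.map_congr_left
      intro t ht
      exact evalT_applyT M v θ t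
decreasing_by simp_wf; have := List.sizeOf_lt_of_mem ht; omega

theorem holds_applyF (M : Str) (v : ℕ → M.D) (θ : ℕ → Tm) :
    ∀ A, holds M v (applyF θ A) ↔ holds M (fun x => evalT M v (θ x)) A
  | .atom P ts => by
      simp only [applyF, holds, List.map_map]
      have heq : List.map (evalT M v ∘ applyT θ) ts
          = List.map (evalT M fun x => evalT M v (θ x)) ts :=
        List.map_congr_left (fun t _ => evalT_applyT M v θ t)
      rw [heq]
  | .conj A B => by
      simp only [applyF, holds, holds_applyF M v θ A, holds_applyF M v θ B]
  | .disj A B => by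
      simp only [applyF, holds, holds_applyF M v θ A, holds_applyF M v θ B]
  | .neg A => by
      simp only [applyF, holds, holds_applyF M v θ A]

/-- the RPL₀ rules preserve semantic consequence. For every structure M:
    each unary rule (∧r₁, ∧r₂, ∧l, ∨r, ∨l₁, ∨l₂, ¬r, ¬l) turns a sequent valid under
    all assignments into a valid sequent; and for the resolution rule with m.g.u. σ of
    the resolved atoms and variable-disjoint premises, validity of both premises
    implies validity of the resolved conclusion. -/
theorem rpl0_rules_preserve_validity (M : Str) :
    (∀ (Γ Δ : Multiset Form) (A B : Form),
      SeqValid M (Γ, (Form.conj A B) ::ₘ Δ) → SeqValid M (Γ, A ::ₘ Δ)) ∧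
    (∀ (Γ Δ : Multiset Form) (A B : Form),
      SeqValid M (Γ, (Form.conj A B) ::ₘ Δ) → SeqValid M (Γ, B ::ₘ Δ)) ∧
    (∀ (Γ Δ : Multiset Form) (A B : Form),
      SeqValid M ((Form.conj A B) ::ₘ Γ, Δ) → SeqValid M (A ::ₘ B ::ₘ Γ, Δ)) ∧
    (∀ (Γ Δ : Multiset Form) (A B : Form),
      SeqValid M (Γ, (Form.disj A B) ::ₘ Δ) → SeqValid M (Γ, A ::ₘ B ::ₘ Δ)) ∧
    (∀ (Γ Δ : Multiset Form) (A B : Form),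
      SeqValid M ((Form.disj A B) ::ₘ Γ, Δ) → SeqValid M (A ::ₘ Γ, Δ)) ∧
    (∀ (Γ Δ : Multiset Form) (A B : Form),
      SeqValid M ((Form.disj A B) ::ₘ Γ, Δ) → SeqValid M (B ::ₘ Γ, Δ)) ∧
    (∀ (Γ Δ : Multiset Form) (A : Form),
      SeqValid M (Γ, (Form.neg A) ::ₘ Δ) → SeqValid M (A ::ₘ Γ, Δ)) ∧
    (∀ (Γ Δ : Multiset Form) (A : Form),
      SeqValid M ((Form.neg A) ::ₘ Γ, Δ) → SeqValid M (Γ, A ::ₘ Δ)) ∧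
    (∀ (Γ Δ Γ₂ Δ₂ : Multiset Form) (As Bs : List Form) (θ : ℕ → Tm),
      As ≠ [] → Bs ≠ [] →
      (∀ A ∈ As, IsAtomF A) → (∀ B ∈ Bs, IsAtomF B) →
      (∀ x : ℕ, (∃ A ∈ As, VarInF x A) → ¬ ∃ B ∈ Bs, VarInF x B) →
      IsMGUL θ (As ++ Bs) →
      SeqValid M (Γ, Δ + ↑As) → SeqValid M (↑Bs + Γ₂, Δ₂) →
      SeqValid M ((Γ + Γ₂).map (applyF θ), (Δ + Δ₂).map (applyF θ))) := by
  refine ⟨?_, ?_, ?_, ?_, ?_, ?_, ?_, ?_, ?_⟩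
  · intro Γ Δ A B h v hΓ
    obtain ⟨C, hC, hCh⟩ := h v hΓ
    simp only [Multiset.mem_cons] at hC
    rcases hC with rfl | hC
    · exact ⟨A, Multiset.mem_cons_self _ _, hCh.1⟩
    · exact ⟨C, Multiset.mem_cons_of_mem hC, hCh⟩
  · intro Γ Δ A B h v hΓ
    obtain ⟨C, hC, hCh⟩ := h v hΓ
    simp only [Multiset.mem_cons] at hC
    rcases hC with rfl | hC
    · exact ⟨B, Multiset.mem_cons_self _ _, hCh.2⟩
    · exact ⟨C, Multiset.mem_cons_of_mem hC, hCh⟩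
  · intro Γ Δ A B h v hΓ
    apply h v
    intro C hC
    simp only [Multiset.mem_cons] at hC
    rcases hC with rfl | hC
    · exact ⟨hΓ A (Multiset.mem_cons_self _ _),
        hΓ B (Multiset.mem_cons_of_mem (Multiset.mem_cons_self _ _))⟩
    · exact hΓ C (Multiset.mem_cons_of_mem (Multiset.mem_cons_of_mem hC))
  · intro Γ Δ A B h v hΓ
    obtain ⟨C, hC, hCh⟩ := h v hΓ
    simp only [Multiset.mem_cons] at hC
    rcases hC with rfl | hC
    · rcases hCh with hA | hB
      · exact ⟨A, Multiset.mem_cons_self _ _, hA⟩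
      · exact ⟨B, Multiset.mem_cons_of_mem (Multiset.mem_cons_self _ _), hB⟩
    · exact ⟨C, Multiset.mem_cons_of_mem (Multiset.mem_cons_of_mem hC), hCh⟩
  · intro Γ Δ A B h v hΓ
    apply h v
    intro C hC
    simp only [Multiset.mem_cons] at hC
    rcases hC with rfl | hC
    · exact Or.inl (hΓ A (Multiset.mem_cons_self _ _))
    · exact hΓ C (Multiset.mem_cons_of_mem hC)
  · intro Γ Δ A B h v hΓ
    apply h v
    intro C hC
    simp only [Multiset.mem_cons] at hC
    rcases hC with rfl | hC
    · exact Or.inr (hΓ B (Multiset.mem_cons_self _ _))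
    · exact hΓ C (Multiset.mem_cons_of_mem hC)
  · intro Γ Δ A h v hΓ
    obtain ⟨C, hC, hCh⟩ := h v (fun C hC => hΓ C (Multiset.mem_cons_of_mem hC))
    simp only [Multiset.mem_cons] at hC
    rcases hC with rfl | hC
    · exact absurd (hΓ A (Multiset.mem_cons_self _ _)) hCh
    · exact ⟨C, hC, hCh⟩
  · intro Γ Δ A h v hΓ
    by_cases hA : holds M v A
    · exact ⟨A, Multiset.mem_cons_self _ _, hA⟩
    · have hv : ∀ C ∈ (Form.neg A) ::ₘ Γ, holds M v C := by
        intro C hC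
        simp only [Multiset.mem_cons] at hC
        rcases hC with rfl | hC
        · exact hA
        · exact hΓ C hC
      obtain ⟨C, hC, hCh⟩ := h v hv
      exact ⟨C, Multiset.mem_cons_of_mem hC, hCh⟩
  · intro Γ Δ Γ₂ Δ₂ As Bs θ _ _ _ _ _ hmgu h1 h2 v hΓ
    set w : ℕ → M.D := fun x => evalT M v (θ x) with hw
    have hΓw : ∀ C ∈ Γ + Γ₂, holds M w C := by
      intro C hC
      have := hΓ (applyF θ C) (Multiset.mem_map_of_mem _ hC)
      exact (holds_applyF M v θ C).mp this
    obtain ⟨C, hC, hCh⟩ := h1 w (fun C hC => hΓw C (Multiset.mem_add.2 (Or.inl hC)))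
    rw [Multiset.mem_add] at hC
    rcases hC with hC | hC
    · exact ⟨applyF θ C, Multiset.mem_map_of_mem _ (Multiset.mem_add.2 (Or.inl hC)),
        (holds_applyF M v θ C).mpr hCh⟩
    · -- C ∈ As holds under w; transfer to all Bs
      rw [Multiset.mem_coe] at hC
      have hBs : ∀ B ∈ Bs, holds M w B := by
        intro B hB
        have heq : applyF θ B = applyF θ C :=
          hmgu.1 B (List.mem_append.2 (Or.inr hB)) C (List.mem_append.2 (Or.inl hC))
        have : holds M v (applyF θ C) := (holds_applyF M v θ C).mpr hCh
        rw [← heq] at this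
        exact (holds_applyF M v θ B).mp this
      have hv2 : ∀ D ∈ (↑Bs : Multiset Form) + Γ₂, holds M w D := by
        intro D hD
        rw [Multiset.mem_add] at hD
        rcases hD with hD | hD
        · exact hBs D (Multiset.mem_coe.mp hD)
        · exact hΓw D (Multiset.mem_add.2 (Or.inr hD))
      obtain ⟨D, hD, hDh⟩ := h2 w hv2
      exact ⟨applyF θ D, Multiset.mem_map_of_mem _ (Multiset.mem_add.2 (Or.inr hD)),
        (holds_applyF M v θ D).mpr hDh⟩
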